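/- Assume the setup, the stability assumption, and the γ-feasibility assumption with γ ∈ [γ_min, γ_max]. Let r_0 > 0 and let l(r_0) be a Lipschitz constant of the Hessian of a on the ball {Θ : ‖Θ − Θ*‖ ≤ r_0}, i.e. ‖∇²a(Θ) − ∇²a(Θ')‖ ≤ l(r_0)‖Θ − Θ'‖ in the operator norm induced by the spectral norm, for all Θ, Θ' in this ball. Set c_0 = 2 l(r_0) ω max{να/(2β(2−ν)), 1}² and c_1 = max{1, να/(2β(2−ν))}^{-1} r_0/2. Then for all Δ_S ∈ Ω and Δ_L ∈ Sym(d) with ‖(Δ_S, Δ_L)‖_γ ≤ c_1, the Taylor remainder R(Δ_S + Δ_L) = ∇a(Θ* + Δ_S + Δ_L) − ∇a(Θ*) − H*(Δ_S + Δ_L) satisfies ‖D R(Δ_S + Δ_L)‖_γ ≤ (c_0/ξ(T)) ‖(Δ_S, Δ_L)‖_γ². -/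

import Mathlib

noncomputable section

open scoped BigOperators
open Matrix

namespace IsingSL

/-- The space of real `d × d` matrices.  Symmetry (membership in `Sym(d)`) is imposed
through explicit hypotheses `Matrix.IsSymm`. -/
abbrev Mat (d : ℕ) := Matrix (Fin d) (Fin d) ℝ

/-- The trace inner product `⟨A, B⟩ = tr(Aᵀ B)`. -/
def minner {d : ℕ} (A B : Mat d) : ℝ := (Aᵀ * B).trace

/-- Entrywise `ℓ∞`-norm of a matrix. -/
def normInf {d : ℕ} (M : Mat d) : ℝ := ⨆ p : Fin d × Fin d, |M p.1 p.2|

/-- Entrywise `ℓ1`-norm of a matrix. -/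
def norm1 {d : ℕ} (M : Mat d) : ℝ := ∑ i, ∑ j, |M i j|

/-- Euclidean norm of a vector. -/
def vnorm {d : ℕ} (v : Fin d → ℝ) : ℝ := Real.sqrt (∑ i, v i ^ 2)

/-- Spectral norm (`ℓ2`-operator norm) of a matrix. -/
def specNorm {d : ℕ} (M : Mat d) : ℝ :=
  sSup {t | ∃ v : Fin d → ℝ, vnorm v ≤ 1 ∧ t = vnorm (M.mulVec v)}

/-- Nuclear norm of a matrix (sum of singular values), characterized via
trace duality with the spectral norm. -/
def nucNorm {d : ℕ} (M : Mat d) : ℝ :=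
  sSup {t | ∃ B : Mat d, specNorm B ≤ 1 ∧ t = minner M B}

/-- The `γ`-norm of a pair of matrices: `‖(S, L)‖_γ = max {‖S‖_∞/γ, ‖L‖}`. -/
def ganorm {d : ℕ} (γ : ℝ) (S L : Mat d) : ℝ := max (normInf S / γ) (specNorm L)

/-- The `{0,1}`-vector corresponding to `x : Fin d → Bool`. -/
def b2r {d : ℕ} (x : Fin d → Bool) : Fin d → ℝ := fun i => if x i then 1 else 0

/-- The sufficient statistics `Φ(x) = x xᵀ` for `x ∈ {0,1}^d`. -/
def phi {d : ℕ} (x : Fin d → Bool) : Mat d := Matrix.of fun i j => b2r x i * b2r x j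

/-- The log-partition function `a(Θ)` of the pairwise Ising model. -/
def logA {d : ℕ} (Θ : Mat d) : ℝ :=
  Real.log (∑ x : Fin d → Bool, Real.exp (minner Θ (phi x)))

/-- The Ising probability mass function `p(x) = exp(⟨Θ, Φ(x)⟩ - a(Θ))`. -/
def isingPMF {d : ℕ} (Θ : Mat d) (x : Fin d → Bool) : ℝ :=
  Real.exp (minner Θ (phi x) - logA Θ)

/-- `Φ* = E_Θ[Φ]`, the expected sufficient statistics; this is the gradient `∇a(Θ)`
of the log-partition function w.r.t. the trace inner product. -/
def meanPhi {d : ℕ} (Θ : Mat d) : Mat d := ∑ x : Fin d → Bool, isingPMF Θ x • phi x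

/-- The Hessian `∇²a(Θ)` of the log-partition function as a linear operator on matrices;
it is the covariance operator `M ↦ E[⟨Φ,M⟩Φ] - ⟨E[Φ],M⟩E[Φ]` of the sufficient statistics. -/
def hessA {d : ℕ} (Θ : Mat d) (M : Mat d) : Mat d :=
  (∑ x : Fin d → Bool, (isingPMF Θ x * minner (phi x) M) • phi x)
    - minner (meanPhi Θ) M • meanPhi Θ

/-- The empirical second-moment matrix `Φ^n` of a sample. -/
def empPhi {d n : ℕ} (xs : Fin n → (Fin d → Bool)) : Mat d :=
  (n : ℝ)⁻¹ • ∑ k, phi (xs k)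

/-- The negative log-likelihood `ℓ(Θ) = a(Θ) - ⟨Θ, Φ^n⟩`. -/
def nll {d : ℕ} (Phin Θ : Mat d) : ℝ := logA Θ - minner Θ Phin

/-- The probability of the event `E` under `n` i.i.d. samples from the Ising
distribution with parameter `Θ`. -/
def samplesProb {d : ℕ} (Θ : Mat d) (n : ℕ) (E : Set (Fin n → (Fin d → Bool))) : ℝ :=
  ∑ xs : Fin n → (Fin d → Bool), E.indicator (fun ys => ∏ k, isingPMF Θ (ys k)) xs

/-- Probability vectors on `{0,1}^d`. -/
def IsProbVec {d : ℕ} (p : (Fin d → Bool) → ℝ) : Prop :=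
  (∀ x, 0 ≤ p x) ∧ ∑ x : Fin d → Bool, p x = 1

/-- The (Shannon) entropy `H(p) = -Σ_x p(x) log p(x)` (with `0 log 0 = 0`). -/
def entropy {d : ℕ} (p : (Fin d → Bool) → ℝ) : ℝ :=
  -∑ x : Fin d → Bool, p x * Real.log (p x)

/-- The expectation `E_p[Φ]` of the sufficient statistics under `p`. -/
def Ephi {d : ℕ} (p : (Fin d → Bool) → ℝ) : Mat d :=
  ∑ x : Fin d → Bool, p x • phi x

/-- The linear identification of `d × d` matrices with the euclidean space on `d·d`
coordinates; under this identification the euclidean inner product corresponds to the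
trace inner product on matrices. -/
def matEuclid (d : ℕ) : Mat d ≃ₗ[ℝ] EuclideanSpace ℝ (Fin d × Fin d) where
  toFun M := WithLp.toLp 2 (fun p : Fin d × Fin d => M p.1 p.2)
  invFun v := Matrix.of fun i j => v (i, j)
  map_add' _ _ := rfl
  map_smul' _ _ := rfl
  left_inv _ := rfl
  right_inv _ := rfl

/-- Orthogonal projection onto a subspace `V` of `Mat d`, w.r.t. the trace inner product. -/
def proj {d : ℕ} (V : Submodule ℝ (Mat d)) (M : Mat d) : Mat d :=
  (matEuclid d).symm
    ((Submodule.orthogonalProjectionOnto (V.map ((matEuclid d) : Mat d →ₗ[ℝ] EuclideanSpace ℝ (Fin d × Fin d)))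
      ((matEuclid d) M) : EuclideanSpace ℝ (Fin d × Fin d)))

/-- Projection onto the orthogonal complement of `V`. -/
def projPerp {d : ℕ} (V : Submodule ℝ (Mat d)) (M : Mat d) : Mat d := M - proj V M

/-- The twisting `ρ(T, T') = max_{‖M‖=1} ‖(P_T - P_{T'}) M‖` between two subspaces. -/
def rho {d : ℕ} (T T' : Submodule ℝ (Mat d)) : ℝ :=
  sSup {t | ∃ M : Mat d, specNorm M = 1 ∧ t = specNorm (proj T M - proj T' M)}

/-- `ξ(T)`: the smallest `ξ` with `‖M‖_∞ ≤ ξ ‖M‖` for all `M ∈ T`. -/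
def xi {d : ℕ} (T : Submodule ℝ (Mat d)) : ℝ :=
  sInf {c | ∀ M ∈ T, normInf M ≤ c * specNorm M}

/-- `μ(Ω)`: the smallest `μ` with `‖N‖ ≤ μ ‖N‖_∞` for all `N ∈ Ω`. -/
def mu {d : ℕ} (Om : Submodule ℝ (Mat d)) : ℝ :=
  sInf {c | ∀ N ∈ Om, specNorm N ≤ c * normInf N}

/-- `Ω(S) = {M ∈ Sym(d) : supp(M) ⊆ supp(S)}`, the tangent space at `S` to the variety
of symmetric matrices with at most `|supp S|` nonzero entries. -/
def OmegaS {d : ℕ} (S : Mat d) : Submodule ℝ (Mat d) where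
  carrier := {M | M.IsSymm ∧ ∀ i j, S i j = 0 → M i j = 0}
  add_mem' := by
    rintro a b ⟨ha, ha0⟩ ⟨hb, hb0⟩
    refine ⟨?_, fun i j h => ?_⟩
    · show (a + b)ᵀ = a + b
      rw [Matrix.transpose_add, ha, hb]
    · show a i j + b i j = 0
      rw [ha0 i j h, hb0 i j h, add_zero]
  zero_mem' := by
    refine ⟨?_, fun i j _ => rfl⟩
    show (0 : Mat _)ᵀ = 0
    rw [Matrix.transpose_zero]
  smul_mem' := by
    rintro c a ⟨ha, ha0⟩
    refine ⟨?_, fun i j h => ?_⟩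
    · show (c • a)ᵀ = c • a
      rw [Matrix.transpose_smul, ha]
    · show c * a i j = 0
      rw [ha0 i j h, mul_zero]

/-- `T(L) = {U Xᵀ + X Uᵀ : X ∈ ℝ^{d×r}}`, the tangent space at `L = U D Uᵀ` to the
variety of symmetric matrices of rank at most `r`. -/
def TSpace {d r : ℕ} (U : Matrix (Fin d) (Fin r) ℝ) : Submodule ℝ (Mat d) where
  carrier := {M | ∃ X : Matrix (Fin d) (Fin r) ℝ, M = U * Xᵀ + X * Uᵀ}
  add_mem' := by
    rintro a b ⟨X, rfl⟩ ⟨Y, rfl⟩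
    exact ⟨X + Y, by rw [Matrix.transpose_add, Matrix.mul_add, Matrix.add_mul]; abel⟩
  zero_mem' := ⟨0, by simp⟩
  smul_mem' := by
    rintro c a ⟨X, rfl⟩
    exact ⟨c • X, by rw [Matrix.transpose_smul, Matrix.mul_smul, Matrix.smul_mul, smul_add]⟩

/-- `T'` is the tangent space `T(L')` at some rank-`r` symmetric matrix
`L' = U D Uᵀ` (restricted eigenvalue decomposition: `U` with orthonormal columns,
`D` invertible diagonal). -/
def IsTangentSpace (d r : ℕ) (T' : Submodule ℝ (Mat d)) : Prop :=
  ∃ (U : Matrix (Fin d) (Fin r) ℝ) (D : Matrix (Fin r) (Fin r) ℝ),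
    Uᵀ * U = 1 ∧ D.IsDiag ∧ IsUnit D.det ∧ T' = TSpace U

/-- A solution of the tangent-space constrained problem
`min_{(S,L) ∈ Om × T'} ℓ(S+L) + λ(γ‖S‖₁ + ‖L‖_*)`. -/
def IsYSol {d : ℕ} (Om T' : Submodule ℝ (Mat d)) (Phin : Mat d) (lam γ : ℝ)
    (p : Mat d × Mat d) : Prop :=
  p.1 ∈ Om ∧ p.2 ∈ T' ∧
    ∀ q : Mat d × Mat d, q.1 ∈ Om → q.2 ∈ T' →
      nll Phin (p.1 + p.2) + lam * (γ * norm1 p.1 + nucNorm p.2) ≤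
        nll Phin (q.1 + q.2) + lam * (γ * norm1 q.1 + nucNorm q.2)

/-- A solution of the convex program
`min_{S, L ∈ Sym(d), L ⪰ 0} ℓ(S+L) + λ(γ‖S‖₁ + tr L)`. -/
def IsSLSol {d : ℕ} (Phin : Mat d) (lam γ : ℝ) (p : Mat d × Mat d) : Prop :=
  p.1.IsSymm ∧ p.2.PosSemidef ∧
    ∀ q : Mat d × Mat d, q.1.IsSymm → q.2.PosSemidef →
      nll Phin (p.1 + p.2) + lam * (γ * norm1 p.1 + p.2.trace) ≤
        nll Phin (q.1 + q.2) + lam * (γ * norm1 q.1 + q.2.trace)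

/-- The setup: a nonzero symmetric matrix `S*` and a positive-semidefinite `L*` with
restricted eigenvalue decomposition `L* = U D Uᵀ` (so `L*` has rank `r`). -/
structure Setup (d r : ℕ) where
  Sstar : Mat d
  U : Matrix (Fin d) (Fin r) ℝ
  Dg : Matrix (Fin r) (Fin r) ℝ
  hU : Uᵀ * U = 1
  hDdiag : Dg.IsDiag
  hDunit : IsUnit Dg.det
  hSsymm : Sstar.IsSymm
  hSne : Sstar ≠ 0
  hLpsd : (U * Dg * Uᵀ).PosSemidef

namespace Setup

variable {d r : ℕ} (C : Setup d r)

/-- `L* = U D Uᵀ`. -/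
def Lstar : Mat d := C.U * C.Dg * C.Uᵀ

/-- `Θ* = S* + L*`. -/
def Thstar : Mat d := C.Sstar + C.Lstar

/-- `Ω = Ω(S*)`. -/
def Om : Submodule ℝ (Mat d) := OmegaS C.Sstar

/-- `T = T(L*)`. -/
def Tt : Submodule ℝ (Mat d) := TSpace C.U

/-- `H* = ∇²a(Θ*)`, the Hessian of the log-partition function at `Θ*`. -/
def Hop : Mat d → Mat d := hessA C.Thstar

/-- `‖H*‖`, the operator norm of `H*` w.r.t. the spectral norm. -/
def HopNorm : ℝ := sSup {t | ∃ M : Mat d, specNorm M = 1 ∧ t = specNorm (C.Hop M)}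

/-- `ξ(T)`. -/
def xiT : ℝ := xi C.Tt

/-- `μ(Ω)`. -/
def muOm : ℝ := mu C.Om

/-- `α_Ω = min {‖P_Ω H*(M)‖_∞ : M ∈ Ω, ‖M‖_∞ = 1}`. -/
def alphaOm : ℝ :=
  sInf {t | ∃ M, M ∈ C.Om ∧ normInf M = 1 ∧ t = normInf (proj C.Om (C.Hop M))}

/-- `α_{T,ε}`. -/
def alphaT (ε : ℝ) : ℝ :=
  sInf {t | ∃ T' : Submodule ℝ (Mat d), IsTangentSpace d r T' ∧ rho C.Tt T' ≤ ε ∧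
    ∃ M, M ∈ T' ∧ specNorm M = 1 ∧ t = specNorm (proj T' (C.Hop M))}

/-- `δ_Ω = max {‖P_{Ω^⊥} H*(M)‖_∞ : M ∈ Ω, ‖M‖_∞ = 1}`. -/
def deltaOm : ℝ :=
  sSup {t | ∃ M, M ∈ C.Om ∧ normInf M = 1 ∧ t = normInf (projPerp C.Om (C.Hop M))}

/-- `δ_{T,ε}`. -/
def deltaT (ε : ℝ) : ℝ :=
  sSup {t | ∃ T' : Submodule ℝ (Mat d), IsTangentSpace d r T' ∧ rho C.Tt T' ≤ ε ∧
    ∃ M, M ∈ T' ∧ specNorm M = 1 ∧ t = specNorm (projPerp T' (C.Hop M))}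

/-- `β_Ω = max {‖H*(M)‖ : M ∈ Ω, ‖M‖ = 1}`. -/
def betaOm : ℝ :=
  sSup {t | ∃ M, M ∈ C.Om ∧ specNorm M = 1 ∧ t = specNorm (C.Hop M)}

/-- `β_T`. -/
def betaT : ℝ :=
  sSup {t | ∃ T' : Submodule ℝ (Mat d), IsTangentSpace d r T' ∧ rho C.Tt T' ≤ C.xiT / 2 ∧
    ∃ M, M ∈ T' ∧ normInf M = 1 ∧ t = normInf (C.Hop M)}

/-- `β = max {β_Ω, β_T}`. -/
def betaC : ℝ := max C.betaOm C.betaT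

/-- `α = min {α_Ω, α_{T,ξ(T)/2}}`. -/
def alphaC : ℝ := min C.alphaOm (C.alphaT (C.xiT / 2))

/-- `δ = max {δ_Ω, δ_{T,ξ(T)/2}}`. -/
def deltaC : ℝ := max C.deltaOm (C.deltaT (C.xiT / 2))

/-- The stability assumption: `α > 0` and `δ/α ≤ 1 - 2ν` for some `ν ∈ (0, 1/2]`. -/
def Stability (ν : ℝ) : Prop :=
  0 < C.alphaC ∧ 0 < ν ∧ ν ≤ 1 / 2 ∧ C.deltaC / C.alphaC ≤ 1 - 2 * ν

/-- `γ_min = 3β(2-ν)ξ(T)/(να)`. -/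
def gammaMin (ν : ℝ) : ℝ := 3 * C.betaC * (2 - ν) * C.xiT / (ν * C.alphaC)

/-- `γ_max = να/(2β(2-ν)μ(Ω))`. -/
def gammaMax (ν : ℝ) : ℝ := ν * C.alphaC / (2 * C.betaC * (2 - ν) * C.muOm)

/-- The `γ`-feasibility assumption: the range `[γ_min, γ_max]` is non-empty. -/
def GammaFeasible (ν : ℝ) : Prop := C.gammaMin ν ≤ C.gammaMax ν

/-- `ω = max {να/(3β(2-ν)), 1}`. -/
def omg (ν : ℝ) : ℝ := max (ν * C.alphaC / (3 * C.betaC * (2 - ν))) 1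

/-- `c₂ = 40/α + 1/‖H*‖`. -/
def c2 : ℝ := 40 / C.alphaC + 1 / C.HopNorm

/-- `c₃ = (6(2-ν)/ν + 1) c₂² ‖H*‖ ω`. -/
def c3 (ν : ℝ) : ℝ := (6 * (2 - ν) / ν + 1) * C.c2 ^ 2 * C.HopNorm * C.omg ν

/-- `c₄ = c₂ + 3αc₂²(2-ν)/(16(3-ν))`. -/
def c4 (ν : ℝ) : ℝ := C.c2 + 3 * C.alphaC * C.c2 ^ 2 * (2 - ν) / (16 * (3 - ν))

/-- `c₅ = max {c₃, c₄}`. -/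
def c5 (ν : ℝ) : ℝ := max (C.c3 ν) (C.c4 ν)

/-- `c₆ = ναc₂/(2β(2-ν))`. -/
def c6 (ν : ℝ) : ℝ := ν * C.alphaC * C.c2 / (2 * C.betaC * (2 - ν))

/-- `c₀ = 2 l(r₀) ω max{να/(2β(2-ν)), 1}²`. -/
def c0 (ν l0 : ℝ) : ℝ :=
  2 * l0 * C.omg ν * (max (ν * C.alphaC / (2 * C.betaC * (2 - ν))) 1) ^ 2

/-- `c₁ = max{1, να/(2β(2-ν))}⁻¹ r₀/2`. -/
def c1 (ν r0 : ℝ) : ℝ :=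
  (max 1 (ν * C.alphaC / (2 * C.betaC * (2 - ν))))⁻¹ * r0 / 2

/-- `s_min`, the smallest absolute value of a nonzero entry of `S*`. -/
def smin : ℝ := sInf {t | ∃ i j, C.Sstar i j ≠ 0 ∧ t = |C.Sstar i j|}

/-- `σ_min`, the smallest nonzero eigenvalue of `L*`. -/
def sigmin : ℝ := sInf {t | t ≠ 0 ∧ ∃ i, t = C.hLpsd.1.eigenvalues i}

/-- The gap assumption: `s_min ≥ c₆λ_n/μ(Ω)` and `σ_min ≥ c₅λ_n/ξ(T)²`. -/
def GapAssumption (ν lam : ℝ) : Prop :=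
  C.c6 ν * lam / C.muOm ≤ C.smin ∧ C.c5 ν * lam / C.xiT ^ 2 ≤ C.sigmin

/-- `l0` is a Lipschitz constant (in operator norm w.r.t. the spectral norm) of the
Hessian `∇²a` on the ball `{Θ : ‖Θ - Θ*‖ ≤ r0}`. -/
def HessLip (r0 l0 : ℝ) : Prop :=
  ∀ Θ Θ' : Mat d, specNorm (Θ - C.Thstar) ≤ r0 → specNorm (Θ' - C.Thstar) ≤ r0 →
    ∀ M : Mat d, specNorm (hessA Θ M - hessA Θ' M) ≤ l0 * specNorm (Θ - Θ') * specNorm M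

/-- The correct model set `M`. -/
def Mset (γ ν lam : ℝ) : Set (Mat d × Mat d) :=
  {p | p.1 ∈ C.Om ∧ p.2.IsSymm ∧ p.2.rank ≤ C.Lstar.rank ∧
    ganorm γ (C.Hop ((p.1 - C.Sstar) + (p.2 - C.Lstar)))
      (C.Hop ((p.1 - C.Sstar) + (p.2 - C.Lstar))) ≤ 9 * lam ∧
    specNorm (projPerp C.Tt (p.2 - C.Lstar)) ≤ C.xiT * lam / (C.omg ν * C.HopNorm)}

end Setup

set_option linter.dupNamespace false

variable {d : ℕ}

/-! ### Basic vector norm lemmas -/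

lemma vnorm_nonneg (v : Fin d → ℝ) : 0 ≤ vnorm v := Real.sqrt_nonneg _

lemma vnorm_eq_norm (v : Fin d → ℝ) :
    vnorm v = ‖(WithLp.equiv 2 (Fin d → ℝ)).symm v‖ := by
  rw [EuclideanSpace.norm_eq]
  simp [vnorm, Real.norm_eq_abs, sq_abs]

lemma vnorm_zero : vnorm (0 : Fin d → ℝ) = 0 := by simp [vnorm]

lemma vnorm_smul (c : ℝ) (v : Fin d → ℝ) : vnorm (c • v) = |c| * vnorm v := by
  unfold vnorm
  have : ∑ i, (c • v) i ^ 2 = c ^ 2 * ∑ i, v i ^ 2 := by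
    rw [Finset.mul_sum]; refine Finset.sum_congr rfl fun i _ => by
      simp [Pi.smul_apply, smul_eq_mul]; ring
  rw [this, Real.sqrt_mul (sq_nonneg c), Real.sqrt_sq_eq_abs]

lemma abs_le_vnorm (v : Fin d → ℝ) (i : Fin d) : |v i| ≤ vnorm v := by
  rw [← Real.sqrt_sq_eq_abs]
  exact Real.sqrt_le_sqrt (Finset.single_le_sum (f := fun j => v j ^ 2)
    (fun j _ => sq_nonneg _) (Finset.mem_univ i))

lemma vnorm_eq_zero {v : Fin d → ℝ} (h : vnorm v = 0) : v = 0 := by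
  funext i
  have := abs_le_vnorm v i
  rw [h] at this
  simpa using le_antisymm this (abs_nonneg _)

lemma vnorm_add_le (a b : Fin d → ℝ) : vnorm (a + b) ≤ vnorm a + vnorm b := by
  rw [vnorm_eq_norm, vnorm_eq_norm, vnorm_eq_norm]
  exact norm_add_le _ _

/-! ### Frobenius norm -/

/-- Frobenius norm. -/
def fbNorm (M : Mat d) : ℝ := Real.sqrt (∑ i, ∑ j, M i j ^ 2)

lemma fbNorm_nonneg (M : Mat d) : 0 ≤ fbNorm M := Real.sqrt_nonneg _

lemma vnorm_mulVec_le_fb (M : Mat d) (v : Fin d → ℝ) :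
    vnorm (M.mulVec v) ≤ fbNorm M * vnorm v := by
  unfold vnorm fbNorm
  rw [← Real.sqrt_mul (by positivity)]
  apply Real.sqrt_le_sqrt
  rw [Finset.sum_mul]
  refine Finset.sum_le_sum fun i _ => ?_
  have h := Finset.sum_mul_sq_le_sq_mul_sq Finset.univ (fun j => M i j) v
  simpa [Matrix.mulVec, dotProduct] using h

lemma fbNorm_eq_norm (M : Mat d) : fbNorm M = ‖matEuclid d M‖ := by
  rw [EuclideanSpace.norm_eq]
  unfold fbNorm
  congr 1
  rw [Fintype.sum_prod_type]
  refine Finset.sum_congr rfl fun p _ => ?_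
  simp [matEuclid, Real.norm_eq_abs, sq_abs]
  rfl

/-! ### Spectral norm lemmas -/

lemma specSet_zero_mem (M : Mat d) :
    (0 : ℝ) ∈ {t | ∃ v : Fin d → ℝ, vnorm v ≤ 1 ∧ t = vnorm (M.mulVec v)} :=
  ⟨0, by simp [vnorm_zero], by simp [Matrix.mulVec_zero, vnorm_zero]⟩

lemma specSet_bddAbove (M : Mat d) :
    BddAbove {t | ∃ v : Fin d → ℝ, vnorm v ≤ 1 ∧ t = vnorm (M.mulVec v)} := by
  refine ⟨fbNorm M, ?_⟩
  rintro t ⟨v, hv, rfl⟩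
  calc vnorm (M.mulVec v) ≤ fbNorm M * vnorm v := vnorm_mulVec_le_fb M v
    _ ≤ fbNorm M * 1 := by
        exact mul_le_mul_of_nonneg_left hv (fbNorm_nonneg M)
    _ = fbNorm M := mul_one _

lemma specNorm_nonneg (M : Mat d) : 0 ≤ specNorm M :=
  le_csSup (specSet_bddAbove M) (specSet_zero_mem M)

lemma specNorm_le_of_bound {M : Mat d} {c : ℝ} (hc : 0 ≤ c)
    (h : ∀ v, vnorm (M.mulVec v) ≤ c * vnorm v) : specNorm M ≤ c := by
  refine csSup_le ⟨0, specSet_zero_mem M⟩ ?_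
  rintro t ⟨v, hv, rfl⟩
  calc vnorm (M.mulVec v) ≤ c * vnorm v := h v
    _ ≤ c * 1 := mul_le_mul_of_nonneg_left hv hc
    _ = c := mul_one _

lemma specNorm_le_fb (M : Mat d) : specNorm M ≤ fbNorm M :=
  specNorm_le_of_bound (fbNorm_nonneg M) (vnorm_mulVec_le_fb M)

lemma vnorm_mulVec_le_spec (M : Mat d) (v : Fin d → ℝ) :
    vnorm (M.mulVec v) ≤ specNorm M * vnorm v := by
  rcases eq_or_ne (vnorm v) 0 with h | h
  · rw [vnorm_eq_zero h, Matrix.mulVec_zero, vnorm_zero, mul_zero]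
  · have hvpos : 0 < vnorm v := lt_of_le_of_ne (vnorm_nonneg v) (Ne.symm h)
    set u := (vnorm v)⁻¹ • v with hu
    have hun : vnorm u = 1 := by
      rw [hu, vnorm_smul, abs_of_pos (inv_pos.mpr hvpos), inv_mul_cancel₀ h]
    have hmem : vnorm (M.mulVec u) ∈
        {t | ∃ w : Fin d → ℝ, vnorm w ≤ 1 ∧ t = vnorm (M.mulVec w)} :=
      ⟨u, le_of_eq hun, rfl⟩
    have hle : vnorm (M.mulVec u) ≤ specNorm M := le_csSup (specSet_bddAbove M) hmem
    have hMu : vnorm (M.mulVec u) = (vnorm v)⁻¹ * vnorm (M.mulVec v) := by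
      rw [hu, Matrix.mulVec_smul, vnorm_smul, abs_of_pos (inv_pos.mpr hvpos)]
    rw [hMu] at hle
    calc vnorm (M.mulVec v) = vnorm v * ((vnorm v)⁻¹ * vnorm (M.mulVec v)) := by
          field_simp
      _ ≤ vnorm v * specNorm M := mul_le_mul_of_nonneg_left hle (le_of_lt hvpos)
      _ = specNorm M * vnorm v := mul_comm _ _

lemma vnorm_single (j : Fin d) : vnorm (Pi.single j (1:ℝ)) = 1 := by
  unfold vnorm
  have : ∑ i : Fin d, (Pi.single j (1:ℝ) : Fin d → ℝ) i ^ 2 = 1 := by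
    rw [Finset.sum_eq_single j]
    · simp
    · intro i _ hij; simp [Pi.single_apply, hij]
    · intro h; exact absurd (Finset.mem_univ j) h
  rw [this, Real.sqrt_one]

lemma abs_entry_le_spec (M : Mat d) (i j : Fin d) : |M i j| ≤ specNorm M := by
  have hmv : M.mulVec (Pi.single j (1:ℝ)) = fun k => M k j := by
    funext k
    simp [Matrix.mulVec_single]
  have h1 : |M i j| ≤ vnorm (M.mulVec (Pi.single j (1:ℝ))) := by
    rw [hmv]; exact abs_le_vnorm (fun k => M k j) i
  calc |M i j| ≤ vnorm (M.mulVec (Pi.single j (1:ℝ))) := h1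
    _ ≤ specNorm M * vnorm (Pi.single j (1:ℝ)) := vnorm_mulVec_le_spec M _
    _ = specNorm M := by rw [vnorm_single, mul_one]

lemma specNorm_zero : specNorm (0 : Mat d) = 0 := by
  refine le_antisymm ?_ (specNorm_nonneg 0)
  refine specNorm_le_of_bound le_rfl fun v => ?_
  rw [Matrix.zero_mulVec, vnorm_zero, zero_mul]

lemma eq_zero_of_specNorm_eq_zero {M : Mat d} (h : specNorm M = 0) : M = 0 := by
  funext i j
  have := abs_entry_le_spec M i j
  rw [h] at this
  simpa using le_antisymm this (abs_nonneg _)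

lemma specNorm_pos_of_ne_zero {M : Mat d} (h : M ≠ 0) : 0 < specNorm M :=
  lt_of_le_of_ne (specNorm_nonneg M) fun h0 => h (eq_zero_of_specNorm_eq_zero h0.symm)

lemma specNorm_smul (c : ℝ) (M : Mat d) : specNorm (c • M) = |c| * specNorm M := by
  have key : ∀ (a : ℝ) (N : Mat d), specNorm (a • N) ≤ |a| * specNorm N := by
    intro a N
    refine specNorm_le_of_bound (mul_nonneg (abs_nonneg a) (specNorm_nonneg N)) fun v => ?_
    rw [Matrix.smul_mulVec, vnorm_smul, mul_assoc]
    exact mul_le_mul_of_nonneg_left (vnorm_mulVec_le_spec N v) (abs_nonneg a)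
  refine le_antisymm (key c M) ?_
  rcases eq_or_ne c 0 with rfl | hc
  · simp [specNorm_zero, specNorm_nonneg]
  · have h2 := key c⁻¹ (c • M)
    rw [smul_smul, inv_mul_cancel₀ hc, one_smul, abs_inv] at h2
    have habs : 0 < |c| := abs_pos.mpr hc
    calc |c| * specNorm M ≤ |c| * (|c|⁻¹ * specNorm (c • M)) :=
          mul_le_mul_of_nonneg_left h2 (abs_nonneg c)
      _ = specNorm (c • M) := by field_simp

lemma specNorm_add_le (A B : Mat d) : specNorm (A + B) ≤ specNorm A + specNorm B := by
  refine specNorm_le_of_bound (add_nonneg (specNorm_nonneg A) (specNorm_nonneg B)) fun v => ?_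
  rw [Matrix.add_mulVec]
  calc vnorm (A.mulVec v + B.mulVec v) ≤ vnorm (A.mulVec v) + vnorm (B.mulVec v) :=
        vnorm_add_le _ _
    _ ≤ specNorm A * vnorm v + specNorm B * vnorm v :=
        add_le_add (vnorm_mulVec_le_spec A v) (vnorm_mulVec_le_spec B v)
    _ = (specNorm A + specNorm B) * vnorm v := by ring

lemma specNorm_one (hd : 0 < d) : specNorm (1 : Mat d) = 1 := by
  refine le_antisymm ?_ ?_
  · refine specNorm_le_of_bound zero_le_one fun v => ?_
    rw [Matrix.one_mulVec, one_mul]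
  · have := abs_entry_le_spec (1 : Mat d) ⟨0, hd⟩ ⟨0, hd⟩
    simpa using this

/-! ### Entrywise sup norm lemmas -/

lemma abs_le_normInf (M : Mat d) (i j : Fin d) : |M i j| ≤ normInf M := by
  have := le_ciSup (f := fun p : Fin d × Fin d => |M p.1 p.2|)
    (Set.Finite.bddAbove (Set.finite_range _)) (i, j)
  exact this

lemma normInf_le (hd : 0 < d) {M : Mat d} {c : ℝ} (h : ∀ i j, |M i j| ≤ c) :
    normInf M ≤ c := by
  haveI : Nonempty (Fin d) := ⟨⟨0, hd⟩⟩
  exact ciSup_le fun p => h p.1 p.2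

lemma normInf_nonneg (hd : 0 < d) (M : Mat d) : 0 ≤ normInf M :=
  le_trans (abs_nonneg _) (abs_le_normInf M ⟨0, hd⟩ ⟨0, hd⟩)

lemma normInf_le_spec (hd : 0 < d) (M : Mat d) : normInf M ≤ specNorm M :=
  normInf_le hd fun i j => abs_entry_le_spec M i j

lemma eq_zero_of_normInf_eq_zero {M : Mat d} (h : normInf M = 0) : M = 0 := by
  funext i j
  have := abs_le_normInf M i j
  rw [h] at this
  simpa using le_antisymm this (abs_nonneg _)

lemma normInf_pos_of_ne_zero (hd : 0 < d) {M : Mat d} (h : M ≠ 0) : 0 < normInf M :=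
  lt_of_le_of_ne (normInf_nonneg hd M) fun h0 => h (eq_zero_of_normInf_eq_zero h0.symm)

lemma normInf_smul (hd : 0 < d) (c : ℝ) (M : Mat d) :
    normInf (c • M) = |c| * normInf M := by
  have key : ∀ (a : ℝ) (N : Mat d), normInf (a • N) ≤ |a| * normInf N := by
    intro a N
    refine normInf_le hd fun i j => ?_
    have : (a • N) i j = a * N i j := rfl
    rw [this, abs_mul]
    exact mul_le_mul_of_nonneg_left (abs_le_normInf N i j) (abs_nonneg a)
  refine le_antisymm (key c M) ?_
  rcases eq_or_ne c 0 with rfl | hc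
  · simp
    exact normInf_nonneg hd _
  · have h2 := key c⁻¹ (c • M)
    rw [smul_smul, inv_mul_cancel₀ hc, one_smul, abs_inv] at h2
    have habs : 0 < |c| := abs_pos.mpr hc
    calc |c| * normInf M ≤ |c| * (|c|⁻¹ * normInf (c • M)) :=
          mul_le_mul_of_nonneg_left h2 (abs_nonneg c)
      _ = normInf (c • M) := by field_simp

lemma fb_le_d_mul_spec (M : Mat d) : fbNorm M ≤ d * specNorm M := by
  unfold fbNorm
  have h1 : ∑ i, ∑ j, M i j ^ 2 ≤ (d : ℝ) ^ 2 * specNorm M ^ 2 := by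
    calc ∑ i, ∑ j, M i j ^ 2 ≤ ∑ _i : Fin d, ∑ _j : Fin d, specNorm M ^ 2 := by
          refine Finset.sum_le_sum fun i _ => Finset.sum_le_sum fun j _ => ?_
          rw [← sq_abs]
          exact pow_le_pow_left₀ (abs_nonneg _) (abs_entry_le_spec M i j) 2
      _ = (d : ℝ) ^ 2 * specNorm M ^ 2 := by
          simp [Finset.sum_const]
          ring
  calc Real.sqrt (∑ i, ∑ j, M i j ^ 2) ≤ Real.sqrt ((d:ℝ) ^ 2 * specNorm M ^ 2) :=
        Real.sqrt_le_sqrt h1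
    _ = d * specNorm M := by
        rw [Real.sqrt_mul (sq_nonneg _), Real.sqrt_sq (by positivity),
          Real.sqrt_sq (specNorm_nonneg M)]

lemma fb_le_d_mul_normInf (hd : 0 < d) (M : Mat d) : fbNorm M ≤ d * normInf M := by
  unfold fbNorm
  have h1 : ∑ i, ∑ j, M i j ^ 2 ≤ (d : ℝ) ^ 2 * normInf M ^ 2 := by
    calc ∑ i, ∑ j, M i j ^ 2 ≤ ∑ _i : Fin d, ∑ _j : Fin d, normInf M ^ 2 := by
          refine Finset.sum_le_sum fun i _ => Finset.sum_le_sum fun j _ => ?_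
          rw [← sq_abs]
          exact pow_le_pow_left₀ (abs_nonneg _) (abs_le_normInf M i j) 2
      _ = (d : ℝ) ^ 2 * normInf M ^ 2 := by
          simp [Finset.sum_const]
          ring
  calc Real.sqrt (∑ i, ∑ j, M i j ^ 2) ≤ Real.sqrt ((d:ℝ) ^ 2 * normInf M ^ 2) :=
        Real.sqrt_le_sqrt h1
    _ = d * normInf M := by
        rw [Real.sqrt_mul (sq_nonneg _), Real.sqrt_sq (by positivity),
          Real.sqrt_sq (normInf_nonneg hd M)]


/-! ### Trace inner product algebra -/

lemma minner_eq (A B : Mat d) : minner A B = ∑ i, ∑ j, A i j * B i j := by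
  unfold minner Matrix.trace
  rw [Finset.sum_comm]
  refine Finset.sum_congr rfl fun i _ => ?_
  simp [Matrix.diag, Matrix.mul_apply, Matrix.transpose_apply, mul_comm]

lemma minner_comm (A B : Mat d) : minner A B = minner B A := by
  rw [minner_eq, minner_eq]
  exact Finset.sum_congr rfl fun i _ => Finset.sum_congr rfl fun j _ => mul_comm _ _

lemma minner_add_left (A B C : Mat d) : minner (A + B) C = minner A C + minner B C := by
  simp [minner_eq, Matrix.add_apply, add_mul, Finset.sum_add_distrib]

lemma minner_smul_left (c : ℝ) (A B : Mat d) : minner (c • A) B = c * minner A B := by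
  simp [minner_eq, Matrix.smul_apply, smul_eq_mul, mul_assoc, Finset.mul_sum]

lemma minner_smul_right (c : ℝ) (A B : Mat d) : minner A (c • B) = c * minner A B := by
  rw [minner_comm, minner_smul_left, minner_comm]

lemma minner_add_right (A B C : Mat d) : minner A (B + C) = minner A B + minner A C := by
  rw [minner_comm, minner_add_left, minner_comm B A, minner_comm C A]

lemma minner_zero_right (A : Mat d) : minner A 0 = 0 := by
  simp [minner_eq]

lemma minner_sum_right {ι : Type*} [DecidableEq ι] (s : Finset ι) (A : Mat d) (f : ι → Mat d) :
    minner A (∑ x ∈ s, f x) = ∑ x ∈ s, minner A (f x) := by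
  induction s using Finset.induction with
  | empty => simp [minner_zero_right]
  | insert _ _ h ih => rw [Finset.sum_insert h, Finset.sum_insert h, minner_add_right, ih]

/-! ### Entry formulas -/

lemma meanPhi_apply (Θ : Mat d) (i j : Fin d) :
    meanPhi Θ i j = ∑ x : Fin d → Bool, isingPMF Θ x * phi x i j := by
  unfold meanPhi
  rw [Matrix.sum_apply]
  rfl

lemma hessA_apply (Θ M : Mat d) (i j : Fin d) :
    hessA Θ M i j = (∑ x : Fin d → Bool, isingPMF Θ x * minner (phi x) M * phi x i j)
      - minner (meanPhi Θ) M * meanPhi Θ i j := by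
  unfold hessA
  rw [Matrix.sub_apply, Matrix.sum_apply]
  rfl

lemma isingPMF_pos (Θ : Mat d) (x : Fin d → Bool) : 0 < isingPMF Θ x := Real.exp_pos _

/-! ### Linearity of the Hessian operator -/

lemma hessA_add (Θ M N : Mat d) : hessA Θ (M + N) = hessA Θ M + hessA Θ N := by
  funext i j
  simp only [Matrix.add_apply, hessA_apply, minner_add_right]
  have hs : ∑ x : Fin d → Bool, isingPMF Θ x * (minner (phi x) M + minner (phi x) N) * phi x i j
      = (∑ x : Fin d → Bool, isingPMF Θ x * minner (phi x) M * phi x i j)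
        + ∑ x : Fin d → Bool, isingPMF Θ x * minner (phi x) N * phi x i j := by
    rw [← Finset.sum_add_distrib]
    exact Finset.sum_congr rfl fun x _ => by ring
  rw [hs]; ring

lemma hessA_smul (Θ : Mat d) (c : ℝ) (M : Mat d) : hessA Θ (c • M) = c • hessA Θ M := by
  funext i j
  simp only [Matrix.smul_apply, hessA_apply, minner_smul_right, smul_eq_mul]
  have hs : ∑ x : Fin d → Bool, isingPMF Θ x * (c * minner (phi x) M) * phi x i j
      = c * ∑ x : Fin d → Bool, isingPMF Θ x * minner (phi x) M * phi x i j := by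
    rw [Finset.mul_sum]
    exact Finset.sum_congr rfl fun x _ => by ring
  rw [hs]; ring

lemma hessA_zero (Θ : Mat d) : hessA Θ 0 = 0 := by
  have := hessA_smul Θ 0 0
  rwa [zero_smul, zero_smul] at this

open intervalIntegral in
lemma _integral_id' (a b : ℝ) : (∫ x in a..b, x) = (b ^ 2 - a ^ 2) / 2 := integral_id

open intervalIntegral in
lemma _integral_cmul' (a b c : ℝ) : (∫ x in a..b, c * x) = c * ((b ^ 2 - a ^ 2) / 2) := by
  rw [intervalIntegral.integral_const_mul, integral_id]

open intervalIntegral in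
lemma _integral_sub' {E : Type*} [NormedAddCommGroup E] [NormedSpace ℝ E] (a b : ℝ)
    (f g : ℝ → E) (hf : IntervalIntegrable f MeasureTheory.volume a b)
    (hg : IntervalIntegrable g MeasureTheory.volume a b) :
    (∫ x in a..b, (f x - g x)) = (∫ x in a..b, f x) - ∫ x in a..b, g x :=
  intervalIntegral.integral_sub hf hg

/-! ### Derivatives along a line -/

lemma minner_line (Θ Δ N : Mat d) (t : ℝ) :
    minner (Θ + t • Δ) N = minner Θ N + t * minner Δ N := by
  rw [minner_add_left, minner_smul_left]

lemma lineA_pos (Θ Δ : Mat d) (t : ℝ) :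
    0 < ∑ y : Fin d → Bool, Real.exp (minner Θ (phi y) + t * minner Δ (phi y)) :=
  Finset.sum_pos (fun y _ => Real.exp_pos _) ⟨fun _ => false, Finset.mem_univ _⟩

lemma pmf_line_eq (Θ Δ : Mat d) (x : Fin d → Bool) (t : ℝ) :
    isingPMF (Θ + t • Δ) x = Real.exp (minner Θ (phi x) + t * minner Δ (phi x)
      - Real.log (∑ y : Fin d → Bool,
          Real.exp (minner Θ (phi y) + t * minner Δ (phi y)))) := by
  unfold isingPMF logA
  rw [minner_line]
  have h : (∑ y : Fin d → Bool, Real.exp (minner (Θ + t • Δ) (phi y)))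
      = ∑ y : Fin d → Bool, Real.exp (minner Θ (phi y) + t * minner Δ (phi y)) :=
    Finset.sum_congr rfl fun y _ => by rw [minner_line]
  rw [h]

lemma minner_meanPhi_right (Δ Θ' : Mat d) :
    minner Δ (meanPhi Θ') = ∑ x : Fin d → Bool, isingPMF Θ' x * minner Δ (phi x) := by
  unfold meanPhi
  rw [minner_sum_right]
  exact Finset.sum_congr rfl fun x _ => minner_smul_right _ _ _

lemma minner_meanPhi_left (Θ' Δ : Mat d) :
    minner (meanPhi Θ') Δ = ∑ x : Fin d → Bool, isingPMF Θ' x * minner (phi x) Δ := by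
  rw [minner_comm, minner_meanPhi_right]
  exact Finset.sum_congr rfl fun x _ => by rw [minner_comm]

lemma continuous_pmf_line (Θ Δ : Mat d) (x : Fin d → Bool) :
    Continuous fun t : ℝ => isingPMF (Θ + t • Δ) x := by
  have hfun : (fun t : ℝ => isingPMF (Θ + t • Δ) x)
      = fun t => Real.exp (minner Θ (phi x) + t * minner Δ (phi x)
        - Real.log (∑ y : Fin d → Bool,
            Real.exp (minner Θ (phi y) + t * minner Δ (phi y)))) :=
    funext fun t => pmf_line_eq Θ Δ x t
  rw [hfun]
  have hA : Continuous fun t : ℝ => ∑ y : Fin d → Bool,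
      Real.exp (minner Θ (phi y) + t * minner Δ (phi y)) := by
    refine continuous_finset_sum _ fun y _ => ?_
    exact Real.continuous_exp.comp (continuous_const.add (continuous_id.mul continuous_const))
  have hlog : Continuous fun t : ℝ => Real.log (∑ y : Fin d → Bool,
      Real.exp (minner Θ (phi y) + t * minner Δ (phi y))) := by
    exact hA.log fun t => (lineA_pos Θ Δ t).ne'
  exact Real.continuous_exp.comp
    (((continuous_const.add (continuous_id.mul continuous_const))).sub hlog)

lemma hasDerivAt_pmf_line (Θ Δ : Mat d) (x : Fin d → Bool) (t₀ : ℝ) :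
    HasDerivAt (fun t => isingPMF (Θ + t • Δ) x)
      (isingPMF (Θ + t₀ • Δ) x *
        (minner Δ (phi x) - minner Δ (meanPhi (Θ + t₀ • Δ)))) t₀ := by
  classical
  have hA : ∀ t : ℝ, HasDerivAt
      (fun t : ℝ => ∑ y : Fin d → Bool, Real.exp (minner Θ (phi y) + t * minner Δ (phi y)))
      (∑ y : Fin d → Bool,
        Real.exp (minner Θ (phi y) + t * minner Δ (phi y)) * minner Δ (phi y)) t := by
    intro t
    refine HasDerivAt.fun_sum fun y _ => ?_
    exact (((hasDerivAt_mul_const (minner Δ (phi y))).const_add (minner Θ (phi y)))).exp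
  have hlog : HasDerivAt
      (fun t : ℝ => Real.log (∑ y : Fin d → Bool,
        Real.exp (minner Θ (phi y) + t * minner Δ (phi y))))
      ((∑ y : Fin d → Bool,
          Real.exp (minner Θ (phi y) + t₀ * minner Δ (phi y)) * minner Δ (phi y))
        / ∑ y : Fin d → Bool, Real.exp (minner Θ (phi y) + t₀ * minner Δ (phi y))) t₀ :=
    (hA t₀).log (lineA_pos Θ Δ t₀).ne'
  have haff : HasDerivAt (fun t : ℝ => minner Θ (phi x) + t * minner Δ (phi x))
      (minner Δ (phi x)) t₀ :=
    (hasDerivAt_mul_const (minner Δ (phi x))).const_add (minner Θ (phi x))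
  have hfull := ((haff.sub hlog)).exp
  have hm : minner Δ (meanPhi (Θ + t₀ • Δ))
      = (∑ y : Fin d → Bool,
          Real.exp (minner Θ (phi y) + t₀ * minner Δ (phi y)) * minner Δ (phi y))
        / ∑ y : Fin d → Bool, Real.exp (minner Θ (phi y) + t₀ * minner Δ (phi y)) := by
    rw [minner_meanPhi_right, Finset.sum_div]
    refine Finset.sum_congr rfl fun y _ => ?_
    rw [pmf_line_eq, Real.exp_sub, Real.exp_log (lineA_pos Θ Δ t₀)]
    ring
  have hfun : (fun t => isingPMF (Θ + t • Δ) x)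
      = fun t => Real.exp (minner Θ (phi x) + t * minner Δ (phi x)
        - Real.log (∑ y : Fin d → Bool,
            Real.exp (minner Θ (phi y) + t * minner Δ (phi y)))) :=
    funext fun t => pmf_line_eq Θ Δ x t
  rw [hfun, hm, pmf_line_eq]
  exact hfull

/-! ### The Taylor remainder bound (core analytic estimate) -/

lemma remainder_spec_bound (d : ℕ) (Θ Δ : Mat d) (r0 l0 : ℝ)
    (hl : ∀ Θ₁ Θ₂ : Mat d, specNorm (Θ₁ - Θ) ≤ r0 → specNorm (Θ₂ - Θ) ≤ r0 →
      ∀ M : Mat d, specNorm (hessA Θ₁ M - hessA Θ₂ M) ≤ l0 * specNorm (Θ₁ - Θ₂) * specNorm M)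
    (hΔ : specNorm Δ ≤ r0) (hl0 : 0 ≤ l0) (hr0 : 0 ≤ r0) :
    specNorm (meanPhi (Θ + Δ) - meanPhi Θ - hessA Θ Δ) ≤ l0 / 2 * specNorm Δ ^ 2 := by
  classical
  have hΔ0 : 0 ≤ specNorm Δ := specNorm_nonneg Δ
  refine specNorm_le_of_bound (by positivity) fun v => ?_
  let Lc : (Fin d → ℝ) →L[ℝ] EuclideanSpace ℝ (Fin d) :=
    (PiLp.continuousLinearEquiv 2 ℝ (fun _ : Fin d => ℝ)).symm.toContinuousLinearMap
  have hLnorm : ∀ w : Fin d → ℝ, ‖Lc w‖ = vnorm w := fun w => (vnorm_eq_norm w).symm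
  set F : ℝ → EuclideanSpace ℝ (Fin d) :=
    fun t => Lc ((meanPhi (Θ + t • Δ)).mulVec v) with hF
  set G : ℝ → EuclideanSpace ℝ (Fin d) :=
    fun t => Lc ((hessA (Θ + t • Δ) Δ).mulVec v) with hG
  have hessA_entry : ∀ (t : ℝ) (i j : Fin d), hessA (Θ + t • Δ) Δ i j
      = ∑ x : Fin d → Bool, isingPMF (Θ + t • Δ) x
          * (minner Δ (phi x) - minner Δ (meanPhi (Θ + t • Δ))) * phi x i j := by
    intro t i j
    rw [hessA_apply, minner_comm (meanPhi (Θ + t • Δ)) Δ, meanPhi_apply, Finset.mul_sum,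
      ← Finset.sum_sub_distrib]
    refine Finset.sum_congr rfl fun x _ => ?_
    rw [minner_comm (phi x) Δ]
    ring
  have hderiv : ∀ t : ℝ, HasDerivAt F (G t) t := by
    intro t
    have hpi : HasDerivAt (fun s : ℝ => (meanPhi (Θ + s • Δ)).mulVec v)
        ((hessA (Θ + t • Δ) Δ).mulVec v) t := by
      rw [hasDerivAt_pi]
      intro i
      have hcoordF : (fun s : ℝ => (meanPhi (Θ + s • Δ)).mulVec v i)
          = fun s => ∑ j, (∑ x : Fin d → Bool, isingPMF (Θ + s • Δ) x * phi x i j) * v j := by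
        funext s
        simp [Matrix.mulVec, dotProduct, meanPhi_apply]
      have hcoordG : (hessA (Θ + t • Δ) Δ).mulVec v i
          = ∑ j, (∑ x : Fin d → Bool, isingPMF (Θ + t • Δ) x
              * (minner Δ (phi x) - minner Δ (meanPhi (Θ + t • Δ))) * phi x i j) * v j := by
        simp only [Matrix.mulVec, dotProduct]
        exact Finset.sum_congr rfl fun j _ => by rw [hessA_entry t i j]
      rw [hcoordF, hcoordG]
      refine HasDerivAt.fun_sum fun j _ => ?_
      refine HasDerivAt.mul_const ?_ (v j)
      refine HasDerivAt.fun_sum fun x _ => ?_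
      exact (hasDerivAt_pmf_line Θ Δ x t).mul_const (phi x i j)
    exact (Lc.hasFDerivAt).comp_hasDerivAt t hpi
  have hGcont : Continuous G := by
    refine Lc.continuous.comp ?_
    refine continuous_pi fun i => ?_
    have hcoord : (fun t : ℝ => (hessA (Θ + t • Δ) Δ).mulVec v i)
        = fun t => ∑ j, (∑ x : Fin d → Bool, isingPMF (Θ + t • Δ) x
            * (minner Δ (phi x) - minner Δ (meanPhi (Θ + t • Δ))) * phi x i j) * v j := by
      funext t
      simp only [Matrix.mulVec, dotProduct]
      exact Finset.sum_congr rfl fun j _ => by rw [hessA_entry t i j]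
    rw [hcoord]
    have hmcont : Continuous fun t : ℝ => minner Δ (meanPhi (Θ + t • Δ)) := by
      have : (fun t : ℝ => minner Δ (meanPhi (Θ + t • Δ)))
          = fun t => ∑ x : Fin d → Bool, isingPMF (Θ + t • Δ) x * minner Δ (phi x) :=
        funext fun t => minner_meanPhi_right Δ _
      rw [this]
      exact continuous_finset_sum _ fun x _ =>
        (continuous_pmf_line Θ Δ x).mul continuous_const
    refine continuous_finset_sum _ fun j _ => ?_
    refine Continuous.mul ?_ continuous_const
    refine continuous_finset_sum _ fun x _ => ?_
    exact ((continuous_pmf_line Θ Δ x).mul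
      ((continuous_const.sub hmcont))).mul continuous_const
  have hGint : IntervalIntegrable G MeasureTheory.volume 0 1 := hGcont.intervalIntegrable 0 1
  have hFTC : ∫ t in (0:ℝ)..1, G t = F 1 - F 0 :=
    intervalIntegral.integral_eq_sub_of_hasDerivAt (fun t _ => hderiv t) hGint
  have hsplit : (∫ t in (0:ℝ)..1, (G t - G 0)) = (F 1 - F 0) - G 0 := by
    rw [_integral_sub' 0 1 G (fun _ => G 0) hGint intervalIntegrable_const, hFTC,
      intervalIntegral.integral_const]
    simp
  have hF1 : F 1 = Lc ((meanPhi (Θ + Δ)).mulVec v) := by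
    show Lc ((meanPhi (Θ + (1:ℝ) • Δ)).mulVec v) = _
    rw [one_smul]
  have hF0 : F 0 = Lc ((meanPhi Θ).mulVec v) := by
    show Lc ((meanPhi (Θ + (0:ℝ) • Δ)).mulVec v) = _
    rw [zero_smul, add_zero]
  have hG0 : G 0 = Lc ((hessA Θ Δ).mulVec v) := by
    show Lc ((hessA (Θ + (0:ℝ) • Δ) Δ).mulVec v) = _
    rw [zero_smul, add_zero]
  have hR : Lc ((meanPhi (Θ + Δ) - meanPhi Θ - hessA Θ Δ).mulVec v)
      = (F 1 - F 0) - G 0 := by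
    rw [hF1, hF0, hG0, Matrix.sub_mulVec, Matrix.sub_mulVec, map_sub, map_sub]
  have hptbound : ∀ t ∈ Set.Icc (0:ℝ) 1,
      ‖G t - G 0‖ ≤ l0 * specNorm Δ ^ 2 * vnorm v * t := by
    intro t ht
    have hGt : G t - G 0 = Lc ((hessA (Θ + t • Δ) Δ - hessA Θ Δ).mulVec v) := by
      rw [hG0, Matrix.sub_mulVec, map_sub]
    rw [hGt, hLnorm]
    have hb1 : specNorm ((Θ + t • Δ) - Θ) ≤ r0 := by
      rw [add_sub_cancel_left, specNorm_smul, abs_of_nonneg ht.1]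
      calc t * specNorm Δ ≤ 1 * specNorm Δ := mul_le_mul_of_nonneg_right ht.2 hΔ0
        _ = specNorm Δ := one_mul _
        _ ≤ r0 := hΔ
    have hb2 : specNorm (Θ - Θ) ≤ r0 := by
      rw [sub_self, specNorm_zero]; exact hr0
    calc vnorm ((hessA (Θ + t • Δ) Δ - hessA Θ Δ).mulVec v)
        ≤ specNorm (hessA (Θ + t • Δ) Δ - hessA Θ Δ) * vnorm v :=
          vnorm_mulVec_le_spec _ _
      _ ≤ (l0 * specNorm ((Θ + t • Δ) - Θ) * specNorm Δ) * vnorm v :=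
          mul_le_mul_of_nonneg_right (hl _ _ hb1 hb2 Δ) (vnorm_nonneg v)
      _ = l0 * specNorm Δ ^ 2 * vnorm v * t := by
          rw [add_sub_cancel_left, specNorm_smul, abs_of_nonneg ht.1]
          ring
  have hbound : ‖∫ t in (0:ℝ)..1, (G t - G 0)‖ ≤ l0 * specNorm Δ ^ 2 * vnorm v / 2 := by
    calc ‖∫ t in (0:ℝ)..1, (G t - G 0)‖
        ≤ ∫ t in (0:ℝ)..1, ‖G t - G 0‖ :=
          intervalIntegral.norm_integral_le_integral_norm zero_le_one
      _ ≤ ∫ t in (0:ℝ)..1, l0 * specNorm Δ ^ 2 * vnorm v * t := by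
          refine intervalIntegral.integral_mono_on zero_le_one ?_ ?_ hptbound
          · exact ((hGcont.sub continuous_const).norm).intervalIntegrable 0 1
          · exact Continuous.intervalIntegrable
              ((continuous_const.mul continuous_id)) 0 1
      _ = l0 * specNorm Δ ^ 2 * vnorm v / 2 := by
          have : (fun t : ℝ => l0 * specNorm Δ ^ 2 * vnorm v * t)
              = fun t : ℝ => (l0 * specNorm Δ ^ 2 * vnorm v) * t := rfl
          rw [this, _integral_cmul']
          ring
  have hfinal : vnorm ((meanPhi (Θ + Δ) - meanPhi Θ - hessA Θ Δ).mulVec v)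
      ≤ l0 * specNorm Δ ^ 2 * vnorm v / 2 := by
    rw [← hLnorm, hR, ← hsplit]
    exact hbound
  calc vnorm ((meanPhi (Θ + Δ) - meanPhi Θ - hessA Θ Δ).mulVec v)
      ≤ l0 * specNorm Δ ^ 2 * vnorm v / 2 := hfinal
    _ = l0 / 2 * specNorm Δ ^ 2 * vnorm v := by ring

/-! ### Auxiliary facts about the constants -/

lemma normInf_zero_mat (hd : 0 < d) : normInf (0 : Mat d) = 0 :=
  le_antisymm (normInf_le hd (by simp)) (normInf_nonneg hd 0)

lemma proj_zero (V : Submodule ℝ (Mat d)) : proj V 0 = 0 := by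
  unfold proj
  simp

lemma mu_bound (hd : 0 < d) (Om : Submodule ℝ (Mat d)) {N : Mat d} (hN : N ∈ Om) :
    specNorm N ≤ mu Om * normInf N := by
  have hne : ((d:ℝ)) ∈ {c | ∀ N ∈ Om, specNorm N ≤ c * normInf N} := by
    intro N _
    exact le_trans (specNorm_le_fb N) (fb_le_d_mul_normInf hd N)
  rcases eq_or_ne (normInf N) 0 with h0 | h0
  · rw [h0, mul_zero, eq_zero_of_normInf_eq_zero h0, specNorm_zero]
  · have hpos : 0 < normInf N := lt_of_le_of_ne (normInf_nonneg hd N) (Ne.symm h0)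
    have hge : specNorm N / normInf N ≤ mu Om := by
      refine le_csInf ⟨(d:ℝ), hne⟩ fun c hc => ?_
      rw [div_le_iff₀ hpos]
      exact hc N hN
    calc specNorm N = (specNorm N / normInf N) * normInf N := by field_simp
      _ ≤ mu Om * normInf N := mul_le_mul_of_nonneg_right hge hpos.le

lemma hop_bound (Θ : Mat d) :
    ∃ Cb : ℝ, 0 ≤ Cb ∧ ∀ M : Mat d, specNorm (hessA Θ M) ≤ Cb * specNorm M := by
  let Lh : Mat d →ₗ[ℝ] Mat d :=
    { toFun := hessA Θ
      map_add' := hessA_add Θ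
      map_smul' := fun c M => hessA_smul Θ c M }
  let L2 : EuclideanSpace ℝ (Fin d × Fin d) →ₗ[ℝ] EuclideanSpace ℝ (Fin d × Fin d) :=
    (matEuclid d).toLinearMap ∘ₗ Lh ∘ₗ (matEuclid d).symm.toLinearMap
  let L2c := LinearMap.toContinuousLinearMap L2
  refine ⟨‖L2c‖ * d, by positivity, fun M => ?_⟩
  have e : L2c (matEuclid d M) = matEuclid d (hessA Θ M) := by
    show L2 (matEuclid d M) = matEuclid d (hessA Θ M)
    show matEuclid d (Lh ((matEuclid d).symm (matEuclid d M))) = matEuclid d (hessA Θ M)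
    rw [LinearEquiv.symm_apply_apply]
    rfl
  have h2 : fbNorm (hessA Θ M) = ‖L2c (matEuclid d M)‖ := by
    rw [fbNorm_eq_norm, e]
  calc specNorm (hessA Θ M) ≤ fbNorm (hessA Θ M) := specNorm_le_fb _
    _ = ‖L2c (matEuclid d M)‖ := h2
    _ ≤ ‖L2c‖ * ‖matEuclid d M‖ := L2c.le_opNorm _
    _ = ‖L2c‖ * fbNorm M := by rw [fbNorm_eq_norm]
    _ ≤ ‖L2c‖ * (d * specNorm M) :=
        mul_le_mul_of_nonneg_left (fb_le_d_mul_spec M) (norm_nonneg _)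
    _ = ‖L2c‖ * d * specNorm M := by ring

lemma UUT_ne_zero {r : ℕ} (hr : 0 < r) (U : Matrix (Fin d) (Fin r) ℝ)
    (hU : Uᵀ * U = 1) : U * Uᵀ + U * Uᵀ ≠ 0 := by
  intro h
  have e1 : U * Uᵀ * U = U := by rw [Matrix.mul_assoc, hU, Matrix.mul_one]
  have h3 : Uᵀ * ((U * Uᵀ + U * Uᵀ) * U) = 1 + 1 := by
    rw [Matrix.add_mul, e1, Matrix.mul_add, hU]
  have h2 : Uᵀ * ((U * Uᵀ + U * Uᵀ) * U) = 0 := by rw [h]; simp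
  rw [h2] at h3
  have h4 := congrFun (congrFun h3 ⟨0, hr⟩) ⟨0, hr⟩
  simp only [Matrix.zero_apply, Matrix.add_apply, Matrix.one_apply, if_pos rfl] at h4
  norm_num at h4

namespace Setup

variable {d r : ℕ} (C : Setup d r)

lemma Sstar_mem_Om : C.Sstar ∈ C.Om := ⟨C.hSsymm, fun _ _ h => h⟩

lemma muOm_pos (hd : 0 < d) : 0 < C.muOm := by
  have h : specNorm C.Sstar ≤ C.muOm * normInf C.Sstar := mu_bound hd C.Om C.Sstar_mem_Om
  have h1 : 0 < specNorm C.Sstar := specNorm_pos_of_ne_zero C.hSne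
  have h2 : 0 < normInf C.Sstar := normInf_pos_of_ne_zero hd C.hSne
  nlinarith

lemma xiT_pos (hd : 0 < d) (hr : 0 < r) : 0 < C.xiT := by
  set M₀ : Mat d := C.U * C.Uᵀ + C.U * C.Uᵀ with hM₀
  have hM₀mem : M₀ ∈ TSpace C.U := ⟨C.U, rfl⟩
  have hM₀ne : M₀ ≠ 0 := UUT_ne_zero hr C.U C.hU
  have hspec : 0 < specNorm M₀ := specNorm_pos_of_ne_zero hM₀ne
  have hinf : 0 < normInf M₀ := normInf_pos_of_ne_zero hd hM₀ne
  have hεpos : 0 < normInf M₀ / specNorm M₀ := div_pos hinf hspec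
  have h1 : (1:ℝ) ∈ {c | ∀ M ∈ TSpace C.U, normInf M ≤ c * specNorm M} := by
    intro M _
    rw [one_mul]
    exact normInf_le_spec hd M
  have hlb : ∀ c ∈ {c | ∀ M ∈ TSpace C.U, normInf M ≤ c * specNorm M},
      normInf M₀ / specNorm M₀ ≤ c := by
    intro c hc
    rw [div_le_iff₀ hspec]
    exact hc M₀ hM₀mem
  exact lt_of_lt_of_le hεpos (le_csInf ⟨1, h1⟩ hlb)

lemma xiT_le_one (hd : 0 < d) (hr : 0 < r) : C.xiT ≤ 1 := by
  set M₀ : Mat d := C.U * C.Uᵀ + C.U * C.Uᵀ with hM₀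
  have hM₀mem : M₀ ∈ TSpace C.U := ⟨C.U, rfl⟩
  have hM₀ne : M₀ ≠ 0 := UUT_ne_zero hr C.U C.hU
  have hspec : 0 < specNorm M₀ := specNorm_pos_of_ne_zero hM₀ne
  have h1 : (1:ℝ) ∈ {c | ∀ M ∈ TSpace C.U, normInf M ≤ c * specNorm M} := by
    intro M _
    rw [one_mul]
    exact normInf_le_spec hd M
  have hbdd : BddBelow {c | ∀ M ∈ TSpace C.U, normInf M ≤ c * specNorm M} := by
    refine ⟨0, fun c hc => ?_⟩
    have := hc M₀ hM₀mem
    nlinarith [normInf_pos_of_ne_zero hd hM₀ne]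
  exact csInf_le hbdd h1

lemma betaC_pos (hd : 0 < d) (hα : 0 < C.alphaC) : 0 < C.betaC := by
  have hαOm : 0 < C.alphaOm := lt_of_lt_of_le hα (min_le_left _ _)
  have hSinf : 0 < normInf C.Sstar := normInf_pos_of_ne_zero hd C.hSne
  set M₁ : Mat d := (normInf C.Sstar)⁻¹ • C.Sstar with hM₁
  have hM₁mem : M₁ ∈ C.Om := Submodule.smul_mem _ _ C.Sstar_mem_Om
  have hM₁inf : normInf M₁ = 1 := by
    rw [hM₁, normInf_smul hd, abs_of_pos (inv_pos.mpr hSinf), inv_mul_cancel₀ hSinf.ne']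
  have hbdd : BddBelow {t | ∃ M, M ∈ C.Om ∧ normInf M = 1
      ∧ t = normInf (proj C.Om (C.Hop M))} := by
    refine ⟨0, ?_⟩
    rintro t ⟨M, _, _, rfl⟩
    exact normInf_nonneg hd _
  have hle : C.alphaOm ≤ normInf (proj C.Om (C.Hop M₁)) :=
    csInf_le hbdd ⟨M₁, hM₁mem, hM₁inf, rfl⟩
  have hp : proj C.Om (C.Hop M₁) ≠ 0 := by
    intro h
    rw [h, normInf_zero_mat hd] at hle
    exact absurd (lt_of_lt_of_le hαOm hle) (lt_irrefl 0)
  have hHne : C.Hop M₁ ≠ 0 := fun h => hp (by rw [h, proj_zero])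
  have hHspec : 0 < specNorm (C.Hop M₁) := specNorm_pos_of_ne_zero hHne
  have hM₁ne : M₁ ≠ 0 := by
    intro h
    apply hHne
    rw [h]
    exact hessA_zero C.Thstar
  have hM₁spec : 0 < specNorm M₁ := specNorm_pos_of_ne_zero hM₁ne
  set M₂ : Mat d := (specNorm M₁)⁻¹ • M₁ with hM₂
  have hM₂mem : M₂ ∈ C.Om := Submodule.smul_mem _ _ hM₁mem
  have hM₂spec : specNorm M₂ = 1 := by
    rw [hM₂, specNorm_smul, abs_of_pos (inv_pos.mpr hM₁spec), inv_mul_cancel₀ hM₁spec.ne']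
  have hHM₂ : specNorm (C.Hop M₂) = (specNorm M₁)⁻¹ * specNorm (C.Hop M₁) := by
    have h : C.Hop M₂ = (specNorm M₁)⁻¹ • C.Hop M₁ := hessA_smul C.Thstar _ M₁
    rw [h, specNorm_smul, abs_of_pos (inv_pos.mpr hM₁spec)]
  obtain ⟨Cb, hCb0, hCb⟩ := hop_bound (d := d) C.Thstar
  have hbddAbove : BddAbove {t | ∃ M, M ∈ C.Om ∧ specNorm M = 1
      ∧ t = specNorm (C.Hop M)} := by
    refine ⟨Cb, ?_⟩
    rintro t ⟨M, _, hM1, rfl⟩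
    have h := hCb M
    rw [hM1, mul_one] at h
    exact h
  have hβOm : specNorm (C.Hop M₂) ≤ C.betaOm :=
    le_csSup hbddAbove ⟨M₂, hM₂mem, hM₂spec, rfl⟩
  have hpos : 0 < specNorm (C.Hop M₂) := by
    rw [hHM₂]
    positivity
  calc (0:ℝ) < specNorm (C.Hop M₂) := hpos
    _ ≤ C.betaOm := hβOm
    _ ≤ C.betaC := le_max_left _ _

end Setup

/-- Lemma 5, bound on the Taylor remainder of the gradient of the
log-partition function: under the stability and γ-feasibility assumptions, if `l(r₀)`
is a Lipschitz constant of `∇²a` on the ball of radius `r₀` around `Θ*`, then for all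
`Δ_S ∈ Ω` and symmetric `Δ_L` with `‖(Δ_S, Δ_L)‖_γ ≤ c₁`, the remainder
`R(Δ) = ∇a(Θ* + Δ) - ∇a(Θ*) - H*(Δ)` satisfies
`‖D R(Δ_S + Δ_L)‖_γ ≤ (c₀/ξ(T)) ‖(Δ_S, Δ_L)‖_γ²`. -/
theorem taylor_remainder_bound (d r : ℕ) (hd : 1 ≤ d) (hr : 1 ≤ r)
    (C : Setup d r) (ν γ r0 l0 : ℝ) (hstab : C.Stability ν) (hfeas : C.GammaFeasible ν)
    (hγ : γ ∈ Set.Icc (C.gammaMin ν) (C.gammaMax ν))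
    (hr0 : 0 < r0) (hlip : C.HessLip r0 l0) :
    ∀ DS DL : Mat d, DS ∈ C.Om → DL.IsSymm → ganorm γ DS DL ≤ C.c1 ν r0 →
      ganorm γ (meanPhi (C.Thstar + (DS + DL)) - meanPhi C.Thstar - C.Hop (DS + DL))
          (meanPhi (C.Thstar + (DS + DL)) - meanPhi C.Thstar - C.Hop (DS + DL)) ≤
        C.c0 ν l0 / C.xiT * ganorm γ DS DL ^ 2 := by
  intro DS DL hDS hDLsym hgle
  obtain ⟨hα, hν, hν2, hδ⟩ := hstab
  have hd0 : 0 < d := hd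
  have hr0' : 0 < r := hr
  have h2ν : 0 < 2 - ν := by linarith
  have hβ : 0 < C.betaC := C.betaC_pos hd0 hα
  have hμ : 0 < C.muOm := C.muOm_pos hd0
  have hξpos : 0 < C.xiT := C.xiT_pos hd0 hr0'
  have hξ1 : C.xiT ≤ 1 := C.xiT_le_one hd0 hr0'
  set K : ℝ := max (ν * C.alphaC / (2 * C.betaC * (2 - ν))) 1 with hK
  have hK1 : 1 ≤ K := le_max_right _ _
  have hKpos : 0 < K := lt_of_lt_of_le one_pos hK1
  have hω1 : 1 ≤ C.omg ν := le_max_right _ _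
  have hωge : ν * C.alphaC / (3 * C.betaC * (2 - ν)) ≤ C.omg ν := le_max_left _ _
  obtain ⟨hγ1, hγ2⟩ := hγ
  have hγminpos : 0 < C.gammaMin ν := by
    unfold Setup.gammaMin
    refine div_pos ?_ (mul_pos hν hα)
    exact mul_pos (mul_pos (mul_pos (by norm_num) hβ) h2ν) hξpos
  have hγpos : 0 < γ := lt_of_lt_of_le hγminpos hγ1
  set g : ℝ := ganorm γ DS DL with hg
  have gdef : g = max (normInf DS / γ) (specNorm DL) := hg
  have hg0 : 0 ≤ g := by
    rw [gdef]
    exact le_trans (specNorm_nonneg DL) (le_max_right _ _)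
  have hDSinf : normInf DS ≤ γ * g := by
    have h1 : normInf DS / γ ≤ g := by rw [gdef]; exact le_max_left _ _
    calc normInf DS = normInf DS / γ * γ := by field_simp
      _ ≤ g * γ := mul_le_mul_of_nonneg_right h1 hγpos.le
      _ = γ * g := mul_comm _ _
  have hmuγ : C.muOm * γ ≤ ν * C.alphaC / (2 * C.betaC * (2 - ν)) := by
    have h2 : γ ≤ C.gammaMax ν := hγ2
    unfold Setup.gammaMax at h2
    have h3 : C.muOm * γ ≤ C.muOm * (ν * C.alphaC / (2 * C.betaC * (2 - ν) * C.muOm)) :=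
      mul_le_mul_of_nonneg_left h2 hμ.le
    calc C.muOm * γ ≤ C.muOm * (ν * C.alphaC / (2 * C.betaC * (2 - ν) * C.muOm)) := h3
      _ = ν * C.alphaC / (2 * C.betaC * (2 - ν)) := by
          field_simp
  have hDSspec : specNorm DS ≤ K * g := by
    have h1 : specNorm DS ≤ C.muOm * normInf DS := mu_bound hd0 C.Om hDS
    calc specNorm DS ≤ C.muOm * normInf DS := h1
      _ ≤ C.muOm * (γ * g) := mul_le_mul_of_nonneg_left hDSinf hμ.le
      _ = (C.muOm * γ) * g := by ring
      _ ≤ (ν * C.alphaC / (2 * C.betaC * (2 - ν))) * g :=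
          mul_le_mul_of_nonneg_right hmuγ hg0
      _ ≤ K * g := mul_le_mul_of_nonneg_right (le_max_left _ _) hg0
  have hDLspec : specNorm DL ≤ K * g := by
    have h1 : specNorm DL ≤ g := by rw [gdef]; exact le_max_right _ _
    calc specNorm DL ≤ g := h1
      _ = 1 * g := (one_mul g).symm
      _ ≤ K * g := mul_le_mul_of_nonneg_right hK1 hg0
  have hΔspec : specNorm (DS + DL) ≤ 2 * K * g := by
    calc specNorm (DS + DL) ≤ specNorm DS + specNorm DL := specNorm_add_le DS DL
      _ ≤ 2 * K * g := by linarith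
  have hc1 : C.c1 ν r0 = K⁻¹ * r0 / 2 := by
    unfold Setup.c1
    rw [max_comm, ← hK]
  have hΔr0 : specNorm (DS + DL) ≤ r0 := by
    have hgc1 : g ≤ K⁻¹ * r0 / 2 := by rw [← hc1]; exact hgle
    calc specNorm (DS + DL) ≤ 2 * K * g := hΔspec
      _ ≤ 2 * K * (K⁻¹ * r0 / 2) :=
          mul_le_mul_of_nonneg_left hgc1 (by linarith)
      _ = r0 := by field_simp
  have hl0 : 0 ≤ l0 := by
    have hb1 : specNorm ((C.Thstar + r0 • (1 : Mat d)) - C.Thstar) = r0 := by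
      rw [add_sub_cancel_left, specNorm_smul, specNorm_one hd0, abs_of_pos hr0, mul_one]
    have hb2 : specNorm (C.Thstar - C.Thstar) ≤ r0 := by
      rw [sub_self, specNorm_zero]; exact hr0.le
    have h1 := hlip (C.Thstar + r0 • (1 : Mat d)) C.Thstar (le_of_eq hb1) hb2 1
    rw [hb1, specNorm_one hd0, mul_one] at h1
    nlinarith [specNorm_nonneg (hessA (C.Thstar + r0 • (1 : Mat d)) 1 - hessA C.Thstar 1)]
  have hcore : specNorm (meanPhi (C.Thstar + (DS + DL)) - meanPhi C.Thstar
      - C.Hop (DS + DL)) ≤ l0 / 2 * specNorm (DS + DL) ^ 2 :=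
    remainder_spec_bound d C.Thstar (DS + DL) r0 l0 hlip hΔr0 hl0 hr0.le
  set R : Mat d := meanPhi (C.Thstar + (DS + DL)) - meanPhi C.Thstar - C.Hop (DS + DL)
    with hR
  have hspecR : specNorm R ≤ 2 * l0 * K ^ 2 * g ^ 2 := by
    calc specNorm R ≤ l0 / 2 * specNorm (DS + DL) ^ 2 := hcore
      _ ≤ l0 / 2 * (2 * K * g) ^ 2 := by
          refine mul_le_mul_of_nonneg_left ?_ (by linarith)
          exact pow_le_pow_left₀ (specNorm_nonneg _) hΔspec 2
      _ = 2 * l0 * K ^ 2 * g ^ 2 := by ring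
  have hspecR0 : 0 ≤ 2 * l0 * K ^ 2 * g ^ 2 :=
    mul_nonneg (mul_nonneg (mul_nonneg (by norm_num) hl0) (sq_nonneg K)) (sq_nonneg g)
  have hinvγ : 1 / γ ≤ C.omg ν / C.xiT := by
    have h1 : 1 / γ ≤ 1 / C.gammaMin ν := one_div_le_one_div_of_le hγminpos hγ1
    have h2 : 1 / C.gammaMin ν = (ν * C.alphaC / (3 * C.betaC * (2 - ν))) / C.xiT := by
      unfold Setup.gammaMin
      rw [one_div_div, div_div]
    rw [h2] at h1
    calc 1 / γ ≤ (ν * C.alphaC / (3 * C.betaC * (2 - ν))) / C.xiT := h1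
      _ ≤ C.omg ν / C.xiT := by
          exact (div_le_div_iff_of_pos_right hξpos).mpr hωge
  have hfrac0 : 0 ≤ C.omg ν / C.xiT := div_nonneg (le_trans zero_le_one hω1) hξpos.le
  have hRHS : C.c0 ν l0 / C.xiT * g ^ 2 = (2 * l0 * K ^ 2 * g ^ 2) * (C.omg ν / C.xiT) := by
    unfold Setup.c0
    rw [← hK]
    ring
  show max (normInf R / γ) (specNorm R) ≤ C.c0 ν l0 / C.xiT * g ^ 2
  rw [hRHS]
  refine max_le ?_ ?_
  · calc normInf R / γ = normInf R * (1 / γ) := by ring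
      _ ≤ specNorm R * (C.omg ν / C.xiT) :=
          mul_le_mul (normInf_le_spec hd0 R) hinvγ
            (one_div_nonneg.mpr hγpos.le) (specNorm_nonneg R)
      _ ≤ (2 * l0 * K ^ 2 * g ^ 2) * (C.omg ν / C.xiT) :=
          mul_le_mul_of_nonneg_right hspecR hfrac0
  · have hone : 1 ≤ C.omg ν / C.xiT := by
      rw [le_div_iff₀ hξpos, one_mul]
      exact le_trans hξ1 hω1
    calc specNorm R ≤ 2 * l0 * K ^ 2 * g ^ 2 := hspecR
      _ = (2 * l0 * K ^ 2 * g ^ 2) * 1 := (mul_one _).symm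
      _ ≤ (2 * l0 * K ^ 2 * g ^ 2) * (C.omg ν / C.xiT) :=
          mul_le_mul_of_nonneg_left hone hspecR0

end IsingSL
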